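/- Lemma 3.9: a divisor D : V → ℤ is a sum of tails if and only if every pair (i, j) with m i j > 0 and D i ≠ D j is separating (i.e. the set S(D) of nodes joining components with different coefficients of D consists of separating nodes of X). Equivalently, for t ∈ Λ_X: t ∈ Λ_X^0 iff S(t) consists of separating nodes. -/

import Mathlib

open Finset

variable {V : Type*}

/-- The multidegree of a divisor `D` on the nodal curve with dual multigraph `m`:
`(deg D) j = ∑ i, (D i - D j) * m i j`. -/
def mdeg [Fintype V] (m : V → V → ℕ) (D : V → ℤ) : V → ℤ :=
  fun j => ∑ i, (D i - D j) * (m i j : ℤ)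

/-- `k_Z`: the number of nodes where the subcurve `Z` meets its complementary curve. -/
def kdeg [Fintype V] [DecidableEq V] (m : V → V → ℕ) (Z : Finset V) : ℕ :=
  ∑ i ∈ Z, ∑ j ∈ Zᶜ, m i j

/-- The pair `(i, j)` (with `m i j > 0`) corresponds to a separating node:
`m i j = 1` and the edge `{i, j}` is a bridge of `G`. -/
def Separating (m : V → V → ℕ) (G : SimpleGraph V) (i j : V) : Prop :=
  m i j = 1 ∧ G.IsBridge s(i, j)

/-- A tail: a nonempty proper subcurve meeting its complement in a single node. -/
def IsTail [Fintype V] [DecidableEq V] (m : V → V → ℕ) (Q : Finset V) : Prop :=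
  Q.Nonempty ∧ Q ≠ Finset.univ ∧ kdeg m Q = 1

/-- A divisor is a sum of tails if `D = c·1_V + ∑ h a_h · 1_{Q_h}` with the `Q_h` tails. -/
def SumOfTails [Fintype V] [DecidableEq V] (m : V → V → ℕ) (D : V → ℤ) : Prop :=
  ∃ (c : ℤ) (k : ℕ) (a : Fin k → ℤ) (Q : Fin k → Finset V),
    (∀ h, IsTail m (Q h)) ∧
    ∀ i, D i = c + ∑ h, a h * (if i ∈ Q h then 1 else 0)

/-- `Λ_X`: the group of multidegrees of twisters, i.e. the image of `mdeg`. -/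
def Lambda [Fintype V] (m : V → V → ℕ) : Set (V → ℤ) := Set.range (mdeg m)

/-- `Λ_X^0`: multidegrees of sums of tails. -/
def Lambda0 [Fintype V] [DecidableEq V] (m : V → V → ℕ) : Set (V → ℤ) :=
  {t | ∃ D, SumOfTails m D ∧ mdeg m D = t}

/-- The essential connectivity `ε(X)`: the infimum of `k_Z` over nonempty proper `Z ⊆ V`
such that some pair `(i,j)` with `i ∈ Z`, `j ∉ Z`, `m i j > 0` is not separating. -/
noncomputable def eps [Fintype V] [DecidableEq V] (m : V → V → ℕ) (G : SimpleGraph V) : ℕ∞ :=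
  sInf ((fun Z : Finset V => (kdeg m Z : ℕ∞)) ''
    {Z | Z.Nonempty ∧ Z ≠ Finset.univ ∧
      ∃ i ∈ Z, ∃ j, j ∉ Z ∧ 0 < m i j ∧ ¬ Separating m G i j})

lemma tail_cross [Fintype V] [DecidableEq V] {m : V → V → ℕ} {Q : Finset V}
    (hQ : kdeg m Q = 1) {i j : V} (hi : i ∈ Q) (hj : j ∉ Q) (hm : 0 < m i j) :
    m i j = 1 ∧ ∀ a b, a ∈ Q → b ∉ Q → 0 < m a b → a = i ∧ b = j := by
  have hsum : ∑ p ∈ Q ×ˢ Qᶜ, m p.1 p.2 = 1 := by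
    rw [Finset.sum_product]; exact hQ
  have hmemij : (i, j) ∈ Q ×ˢ Qᶜ := Finset.mem_product.2 ⟨hi, Finset.mem_compl.2 hj⟩
  have hle : m i j ≤ 1 := hsum ▸ Finset.single_le_sum
    (f := fun p : V × V => m p.1 p.2) (fun _ _ => Nat.zero_le _) hmemij
  refine ⟨le_antisymm hle hm, fun a b ha hb hab => ?_⟩
  by_contra hne
  have hne' : (a, b) ≠ (i, j) := by
    intro h; exact hne ⟨congrArg Prod.fst h, congrArg Prod.snd h⟩
  have hmemab : (a, b) ∈ Q ×ˢ Qᶜ := Finset.mem_product.2 ⟨ha, Finset.mem_compl.2 hb⟩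
  have hsub : ({(i, j), (a, b)} : Finset (V × V)) ⊆ Q ×ˢ Qᶜ := by
    intro p hp
    rcases Finset.mem_insert.1 hp with h | h
    · exact h ▸ hmemij
    · exact (Finset.mem_singleton.1 h) ▸ hmemab
  have h2 : m i j + m a b ≤ 1 := by
    calc m i j + m a b = ∑ p ∈ ({(i, j), (a, b)} : Finset (V × V)), m p.1 p.2 := by
          rw [Finset.sum_pair (Ne.symm hne')]
      _ ≤ ∑ p ∈ Q ×ˢ Qᶜ, m p.1 p.2 := Finset.sum_le_sum_of_subset hsub
      _ = 1 := hsum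
  omega

lemma tail_sep [Fintype V] [DecidableEq V] {m : V → V → ℕ} {G : SimpleGraph V}
    (hG : ∀ i j, G.Adj i j ↔ i ≠ j ∧ 0 < m i j) {Q : Finset V} (hQ : IsTail m Q)
    {i j : V} (hi : i ∈ Q) (hj : j ∉ Q) (hm : 0 < m i j) : Separating m G i j := by
  obtain ⟨h1, huniq⟩ := tail_cross hQ.2.2 hi hj hm
  have hij : i ≠ j := fun h => hj (h ▸ hi)
  refine ⟨h1, SimpleGraph.isBridge_iff.2 ?_⟩
  have key : ∀ a b, (G \ SimpleGraph.fromEdgeSet {s(i, j)}).Walk a b →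
      a ∈ Q → b ∉ Q → False := by
    intro a b w
    induction w with
    | nil => exact fun h1 h2 => h2 h1
    | @cons a c b hadj p ih =>
      intro ha hb
      by_cases hc : c ∈ Q
      · exact ih hc hb
      · rw [SimpleGraph.sdiff_adj] at hadj
        have hmac : 0 < m a c := ((hG a c).1 hadj.1).2
        obtain ⟨rfl, rfl⟩ := huniq a c ha hc hmac
        exact hadj.2 ((SimpleGraph.fromEdgeSet_adj _).2 ⟨Set.mem_singleton _, hij⟩)
  rintro ⟨w⟩
  exact key i j w hi hj

lemma sep_symm {m : V → V → ℕ} {G : SimpleGraph V} (hsym : ∀ i j, m i j = m j i)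
    {i j : V} (h : Separating m G j i) : Separating m G i j :=
  ⟨(hsym i j).trans h.1, Sym2.eq_swap ▸ h.2⟩

lemma sumOfTails_add_tail [Fintype V] [DecidableEq V] {m : V → V → ℕ} {D : V → ℤ}
    (h : SumOfTails m D) {Q : Finset V} (hQ : IsTail m Q) (a0 : ℤ) :
    SumOfTails m (fun v => D v + a0 * (if v ∈ Q then 1 else 0)) := by
  obtain ⟨c, k, a, Qs, hQs, hrep⟩ := h
  refine ⟨c, k + 1, Fin.cons a0 a, Fin.cons Q Qs, ?_, ?_⟩
  · intro h
    refine Fin.cases ?_ ?_ h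
    · simpa using hQ
    · intro h'; simpa using hQs h'
  · intro v
    rw [Fin.sum_univ_succ]
    simp only [Fin.cons_zero, Fin.cons_succ]
    rw [hrep v]; ring

/-- Lemma 3.9: a divisor `D` is a sum of tails iff every node joining components with
different coefficients of `D` is a separating node. -/
theorem sum_of_tails_iff_separating [Fintype V] [DecidableEq V] [Nonempty V]
    (m : V → V → ℕ) (hsym : ∀ i j, m i j = m j i) (hdiag : ∀ i, m i i = 0)
    (G : SimpleGraph V) (hG : ∀ i j, G.Adj i j ↔ i ≠ j ∧ 0 < m i j)
    (hconn : G.Connected) (D : V → ℤ) :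
    SumOfTails m D ↔ ∀ i j, 0 < m i j → D i ≠ D j → Separating m G i j := by
  classical
  constructor
  · rintro ⟨c, k, a, Q, hQ, hrep⟩ i j hm hD
    have hex : ∃ h, ¬ (i ∈ Q h ↔ j ∈ Q h) := by
      by_contra hall
      push_neg at hall
      apply hD
      rw [hrep i, hrep j]
      congr 1
      refine Finset.sum_congr rfl fun h _ => ?_
      by_cases hi : i ∈ Q h
      · rw [if_pos hi, if_pos ((hall h).1 hi)]
      · rw [if_neg hi, if_neg (fun hj => hi ((hall h).2 hj))]
    obtain ⟨h, hh⟩ := hex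
    by_cases hi : i ∈ Q h
    · have hj : j ∉ Q h := fun hj => hh ⟨fun _ => hj, fun _ => hi⟩
      exact tail_sep hG (hQ h) hi hj hm
    · have hj : j ∈ Q h := by
        by_contra hj; exact hh ⟨fun h' => absurd h' hi, fun h' => absurd h' hj⟩
      exact sep_symm hsym (tail_sep hG (hQ h) hj hi (by rw [hsym]; exact hm))
  · intro hsep
    have main : ∀ n (D : V → ℤ),
        (univ.filter fun p : V × V => 0 < m p.1 p.2 ∧ D p.1 ≠ D p.2).card ≤ n →
        (∀ i j, 0 < m i j → D i ≠ D j → Separating m G i j) → SumOfTails m D := by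
      intro n
      induction n with
      | zero =>
        intro D hcard _
        have hconst : ∀ i j, 0 < m i j → D i = D j := by
          intro i j hm
          by_contra hne
          have : (i, j) ∈ univ.filter fun p : V × V => 0 < m p.1 p.2 ∧ D p.1 ≠ D p.2 :=
            Finset.mem_filter.2 ⟨Finset.mem_univ _, hm, hne⟩
          have := Finset.card_pos.2 ⟨_, this⟩
          omega
        have v0 : V := Classical.arbitrary V
        have hcv : ∀ v, D v = D v0 := by
          intro v
          obtain ⟨w⟩ := hconn.preconnected v v0
          induction w with
          | nil => rfl
          | @cons a c b hadj p ih =>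
            exact (hconst a c ((hG a c).1 hadj).2).trans ih
        exact ⟨D v0, 0, Fin.elim0, Fin.elim0, fun h => h.elim0, fun v => by
          simp [hcv v]⟩
      | succ n ih =>
        intro D hcard hsepD
        by_cases hconst : ∀ i j, 0 < m i j → D i = D j
        · exact ih D (by
            have : (univ.filter fun p : V × V => 0 < m p.1 p.2 ∧ D p.1 ≠ D p.2) = ∅ := by
              refine Finset.filter_eq_empty_iff.2 fun p _ => ?_
              rintro ⟨h1, h2⟩
              exact h2 (hconst _ _ h1)
            simp [this]) hsepD
        · push_neg at hconst
          obtain ⟨i, j, hm, hne⟩ := hconst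
          obtain ⟨hm1, hbr⟩ := hsepD i j hm hne
          set G' := G \ SimpleGraph.fromEdgeSet {s(i, j)} with hG'
          set Q : Finset V := univ.filter fun v => G'.Reachable j v with hQdef
          have hjQ : j ∈ Q := Finset.mem_filter.2 ⟨Finset.mem_univ _, SimpleGraph.Reachable.refl j⟩
          have hiQ : i ∉ Q := by
            intro h
            exact (SimpleGraph.isBridge_iff.1 hbr) ((Finset.mem_filter.1 h).2.symm)
          have hij : i ≠ j := fun h => hne (by rw [h])
          have huniq : ∀ a b, a ∈ Q → b ∉ Q → 0 < m a b → a = j ∧ b = i := by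
            intro a b ha hb hab
            have hane : a ≠ b := by
              intro h; rw [h, hdiag] at hab; exact absurd hab (lt_irrefl 0)
            have hadj : G.Adj a b := (hG a b).2 ⟨hane, hab⟩
            by_cases he : s(a, b) = s(i, j)
            · rcases Sym2.eq_iff.1 he with ⟨rfl, rfl⟩ | ⟨rfl, rfl⟩
              · exact absurd ha hiQ
              · exact ⟨rfl, rfl⟩
            · have hadj' : G'.Adj a b := by
                rw [hG', SimpleGraph.sdiff_adj]
                exact ⟨hadj, fun h => he ((SimpleGraph.fromEdgeSet_adj _).1 h).1⟩
              exact absurd (Finset.mem_filter.2 ⟨Finset.mem_univ _,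
                ((Finset.mem_filter.1 ha).2).trans hadj'.reachable⟩) hb
          have ktail : kdeg m Q = 1 := by
            have : kdeg m Q = ∑ p ∈ Q ×ˢ Qᶜ, m p.1 p.2 := by rw [kdeg, Finset.sum_product]
            rw [this]
            rw [Finset.sum_eq_single_of_mem (j, i)
              (Finset.mem_product.2 ⟨hjQ, Finset.mem_compl.2 hiQ⟩)]
            · rw [← hsym]; exact hm1
            · intro p hp hpne
              by_contra h0
              have hppos : 0 < m p.1 p.2 := Nat.pos_of_ne_zero h0
              obtain ⟨hp1, hp2⟩ := Finset.mem_product.1 hp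
              obtain ⟨h1, h2⟩ := huniq p.1 p.2 hp1 (Finset.mem_compl.1 hp2) hppos
              exact hpne (Prod.ext h1 h2)
          have htail : IsTail m Q :=
            ⟨⟨j, hjQ⟩, fun h => hiQ (h ▸ Finset.mem_univ i), ktail⟩
          set D' : V → ℤ := fun v => D v - (D j - D i) * (if v ∈ Q then 1 else 0) with hD'def
          have hD'i : D' i = D i := by simp [hD'def, hiQ]
          have hD'j : D' j = D i := by simp [hD'def, hjQ]
          have hsub : (univ.filter fun p : V × V => 0 < m p.1 p.2 ∧ D' p.1 ≠ D' p.2) ⊆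
              (univ.filter fun p : V × V => 0 < m p.1 p.2 ∧ D p.1 ≠ D p.2) := by
            intro p hp
            obtain ⟨-, hppos, hpne⟩ := Finset.mem_filter.1 hp
            refine Finset.mem_filter.2 ⟨Finset.mem_univ _, hppos, ?_⟩
            by_cases h1 : p.1 ∈ Q <;> by_cases h2 : p.2 ∈ Q
            · intro h; exact hpne (by simp [hD'def, h1, h2, h])
            · obtain ⟨e1, e2⟩ := huniq p.1 p.2 h1 h2 hppos
              exact absurd (by rw [e1, e2, hD'j, hD'i]) hpne
            · obtain ⟨e1, e2⟩ := huniq p.2 p.1 h2 h1 (by rw [hsym]; exact hppos)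
              exact absurd (by rw [e1, e2, hD'j, hD'i]) hpne
            · intro h; exact hpne (by simp [hD'def, h1, h2, h])
          have hmem : (i, j) ∈ univ.filter fun p : V × V => 0 < m p.1 p.2 ∧ D p.1 ≠ D p.2 :=
            Finset.mem_filter.2 ⟨Finset.mem_univ _, hm, hne⟩
          have hnotmem : (i, j) ∉ univ.filter fun p : V × V => 0 < m p.1 p.2 ∧ D' p.1 ≠ D' p.2 := by
            intro h
            exact (Finset.mem_filter.1 h).2.2 (by rw [hD'i, hD'j])
          have hlt : (univ.filter fun p : V × V => 0 < m p.1 p.2 ∧ D' p.1 ≠ D' p.2).card <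
              (univ.filter fun p : V × V => 0 < m p.1 p.2 ∧ D p.1 ≠ D p.2).card :=
            Finset.card_lt_card (Finset.ssubset_iff_of_subset hsub |>.2 ⟨_, hmem, hnotmem⟩)
          have hsep' : ∀ a b, 0 < m a b → D' a ≠ D' b → Separating m G a b := by
            intro a b hab hne'
            have : (a, b) ∈ univ.filter fun p : V × V => 0 < m p.1 p.2 ∧ D p.1 ≠ D p.2 :=
              hsub (Finset.mem_filter.2 ⟨Finset.mem_univ _, hab, hne'⟩)
            exact hsepD a b hab (Finset.mem_filter.1 this).2.2
          have hST : SumOfTails m D' := ih D' (by omega) hsep'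
          have : D = fun v => D' v + (D j - D i) * (if v ∈ Q then 1 else 0) := by
            funext v; simp [hD'def]
          rw [this]
          exact sumOfTails_add_tail hST htail _
    exact main _ D le_rfl hsep
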